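/- C(0) equals the ℂ-linear span of the following n² elements of ⨁_{b∈ℤ/nℤ} gl_n(ℂ), and these n² elements are linearly independent: for 1 ≤ i ≤ n, the tuple all of whose components are E_{i,i}; for 1 ≤ i < j ≤ n, the tuple whose b-th component is 0 for i ≤ b ≤ j−1 and E_{i,j} for the other b ∈ {0,…,n−1}; and for 1 ≤ i < j ≤ n, the tuple whose b-th component is E_{j,i} for i ≤ b ≤ j−1 and 0 for the other b. -/

import Mathlib

/-- The diagonal matrix `D_b(0)` over `ℂ` whose `(b+1,b+1)` entry (1-based), i.e. `(b,b)`
entry (0-based), is `0` and whose other diagonal entries are `1`. -/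
def Dmat0 (n : ℕ) (b : Fin n) : Matrix (Fin n) (Fin n) ℂ :=
  Matrix.diagonal (fun i => if i = b then 0 else 1)

/-- `C(0)`: tuples `(A_b)_{b ∈ ℤ/nℤ}` of complex `n×n` matrices with
`A_{b+1} D_b(0) = D_b(0) A_b` for all `b`. -/
def Cset0 (n : ℕ) [NeZero n] : Set (Fin n → Matrix (Fin n) (Fin n) ℂ) :=
  {A | ∀ b : Fin n, A (b + 1) * Dmat0 n b = Dmat0 n b * A b}

/-- Index type for the `n²` generators: `n` diagonal ones, and an upper and a lower one
for each pair `i < j`. -/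
abbrev GenIdx (n : ℕ) : Type :=
  Fin n ⊕ ({p : Fin n × Fin n // p.1 < p.2} ⊕ {p : Fin n × Fin n // p.1 < p.2})

/-- The `n²` elements of `⨁_{b ∈ ℤ/nℤ} gl_n(ℂ)`.  Indices are 0-based: the 1-based
condition `i ≤ b ≤ j-1` for `1 ≤ i < j ≤ n`, `b ∈ {0,…,n-1}` reads `i < b ∧ b ≤ j` in
0-based row/column indices `i < j`. -/
def gen0 (n : ℕ) : GenIdx n → (Fin n → Matrix (Fin n) (Fin n) ℂ)
  | Sum.inl i => fun _ => Matrix.single i i 1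
  | Sum.inr (Sum.inl ⟨(i, j), _⟩) => fun b =>
      if i.val < b.val ∧ b.val ≤ j.val then 0 else Matrix.single i j 1
  | Sum.inr (Sum.inr ⟨(i, j), _⟩) => fun b =>
      if i.val < b.val ∧ b.val ≤ j.val then Matrix.single j i 1 else 0

section Aux
variable {n : ℕ} [NeZero n]
open Fin.NatCast

lemma mod_two_cases (n : ℕ) {x : ℕ} (h : x < 2 * n) : x % n = x ∨ (n ≤ x ∧ x % n = x - n) := by
  rcases lt_or_ge x n with h' | h'
  · exact Or.inl (Nat.mod_eq_of_lt h')
  · exact Or.inr ⟨h', by rw [Nat.mod_eq_sub_mod h', Nat.mod_eq_of_lt (by omega)]⟩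

lemma fin_sub_val (a b : Fin n) : (a - b).val = (a.val + (n - b.val)) % n := by
  rw [Fin.sub_def]; simp [Nat.add_comm]

lemma fin_add_one_val (hn : 2 ≤ n) (a : Fin n) : (a + 1).val = (a.val + 1) % n := by
  rw [Fin.val_add, Fin.val_one']
  congr 2
  exact Nat.mod_eq_of_lt (by omega)

lemma fin_add_nat_val (a : Fin n) (t : ℕ) (ht : t < n) :
    (a + (t : Fin n)).val = (a.val + t) % n := by
  rw [Fin.val_add, Fin.val_natCast, Nat.mod_eq_of_lt ht]

variable (A : Fin n → Matrix (Fin n) (Fin n) ℂ)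

lemma cset_entry (hA : A ∈ Cset0 n) (b p q : Fin n) :
    A (b + 1) p q * (if q = b then 0 else 1) = (if p = b then 0 else 1) * A b p q := by
  have h := congrFun (congrFun (hA b) p) q
  simpa [Dmat0, Matrix.mul_diagonal, Matrix.diagonal_mul] using h

lemma cset_step (hA : A ∈ Cset0 n) {b p q : Fin n} (hp : b ≠ p) (hq : b ≠ q) :
    A (b + 1) p q = A b p q := by
  have h := cset_entry A hA b p q
  rw [if_neg (fun h' => hq h'.symm), if_neg (fun h' => hp h'.symm)] at h
  simpa using h

lemma cset_zL (hA : A ∈ Cset0 n) {b q : Fin n} (hq : q ≠ b) : A (b + 1) b q = 0 := by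
  have h := cset_entry A hA b b q
  rw [if_neg hq, if_pos rfl] at h
  simpa using h

lemma cset_zR (hA : A ∈ Cset0 n) {b p : Fin n} (hp : p ≠ b) : A b p b = 0 := by
  have h := cset_entry A hA b p b
  rw [if_pos rfl, if_neg hp] at h
  simpa using h.symm

lemma cset_chain (hA : A ∈ Cset0 n) (p q s : Fin n) (k : ℕ)
    (h : ∀ t, t < k → (s + (t : Fin n)) ≠ p ∧ (s + (t : Fin n)) ≠ q) :
    A (s + (k : Fin n)) p q = A s p q := by
  induction k with
  | zero => simp
  | succ k ih =>
    have hk : ((k + 1 : ℕ) : Fin n) = (k : Fin n) + 1 := by push_cast; ring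
    rw [hk, ← add_assoc,
      cset_step A hA (h k (Nat.lt_succ_self k)).1 (h k (Nat.lt_succ_self k)).2]
    exact ih (fun t ht => h t (Nat.lt_succ_of_lt ht))

lemma cset_reach (hA : A ∈ Cset0 n) (p q s b : Fin n)
    (h : ∀ t : ℕ, t < (b - s).val → (s.val + t) % n ≠ p.val ∧ (s.val + t) % n ≠ q.val) :
    A b p q = A s p q := by
  have hb : s + (((b - s).val : ℕ) : Fin n) = b := by
    rw [Fin.cast_val_eq_self]; abel
  rw [← hb]
  refine cset_chain A hA p q s _ (fun t ht => ?_)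
  have htn : t < n := lt_trans ht (b - s).isLt
  have hv : (s + (t : Fin n)).val = (s.val + t) % n := fin_add_nat_val s t htn
  exact ⟨fun hc => (h t ht).1 (by rw [← hv, hc]),
         fun hc => (h t ht).2 (by rw [← hv, hc])⟩

lemma cset_key (hn : 2 ≤ n) (hA : A ∈ Cset0 n) (b p q : Fin n) :
    A b p q =
      if p = q then A (p + 1) p p
      else if p.val < q.val then
        (if p.val < b.val ∧ b.val ≤ q.val then 0 else A (q + 1) p q)
      else
        (if q.val < b.val ∧ b.val ≤ p.val then A p p q else 0) := by
  have hbn : b.val < n := b.isLt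
  have hpn : p.val < n := p.isLt
  have hqn : q.val < n := q.isLt
  split_ifs with h1 h2 h3 h4 h5
  · -- p = q
    subst h1
    refine cset_reach A hA p p (p + 1) b (fun t ht => ?_)
    have hsv : (p + 1).val = (p.val + 1) % n := fin_add_one_val hn p
    have hd1 := mod_two_cases n (x := p.val + 1) (by omega)
    have hkd := mod_two_cases n (x := b.val + (n - (p + 1).val)) (by omega)
    have hk := fin_sub_val b (p + 1)
    have htn : t < n := lt_trans ht (b - (p + 1)).isLt
    have hm := mod_two_cases n (x := (p + 1).val + t) (by have := (p + 1).isLt; omega)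
    have hsn := (p + 1).isLt
    constructor <;> omega
  · -- p ≠ q, p < q, p < b ≤ q : value 0
    have h0 : A (p + 1) p q = 0 := cset_zL A hA (by intro hc; exact h1 hc.symm)
    rw [← h0]
    refine cset_reach A hA p q (p + 1) b (fun t ht => ?_)
    have hsv : (p + 1).val = (p.val + 1) % n := fin_add_one_val hn p
    have hd1 := mod_two_cases n (x := p.val + 1) (by omega)
    have hkd := mod_two_cases n (x := b.val + (n - (p + 1).val)) (by omega)
    have hk := fin_sub_val b (p + 1)
    have htn : t < n := lt_trans ht (b - (p + 1)).isLt
    have hm := mod_two_cases n (x := (p + 1).val + t) (by have := (p + 1).isLt; omega)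
    have hsn := (p + 1).isLt
    constructor <;> omega
  · -- p < q, else region : value A (q+1) p q
    refine cset_reach A hA p q (q + 1) b (fun t ht => ?_)
    have hsv : (q + 1).val = (q.val + 1) % n := fin_add_one_val hn q
    have hd1 := mod_two_cases n (x := q.val + 1) (by omega)
    have hkd := mod_two_cases n (x := b.val + (n - (q + 1).val)) (by omega)
    have hk := fin_sub_val b (q + 1)
    have htn : t < n := lt_trans ht (b - (q + 1)).isLt
    have hm := mod_two_cases n (x := (q + 1).val + t) (by have := (q + 1).isLt; omega)
    have hsn := (q + 1).isLt
    constructor <;> omega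
  · -- q < p, q < b ≤ p : value A p p q
    have hqp : q.val < p.val := by
      rcases lt_trichotomy p.val q.val with h | h | h
      · exact absurd h h2
      · exact absurd (Fin.ext h) h1
      · exact h
    refine (cset_reach A hA p q b p (fun t ht => ?_)).symm
    have hkd := mod_two_cases n (x := p.val + (n - b.val)) (by omega)
    have hk := fin_sub_val p b
    have htn : t < n := lt_trans ht (p - b).isLt
    have hm := mod_two_cases n (x := b.val + t) (by omega)
    constructor <;> omega
  · -- q < p, else region : value 0
    have hqp : q.val < p.val := by
      rcases lt_trichotomy p.val q.val with h | h | h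
      · exact absurd h h2
      · exact absurd (Fin.ext h) h1
      · exact h
    have h0 : A (p + 1) p q = 0 := cset_zL A hA (by intro hc; exact h1 hc.symm)
    rw [← h0]
    refine cset_reach A hA p q (p + 1) b (fun t ht => ?_)
    have hsv : (p + 1).val = (p.val + 1) % n := fin_add_one_val hn p
    have hd1 := mod_two_cases n (x := p.val + 1) (by omega)
    have hkd := mod_two_cases n (x := b.val + (n - (p + 1).val)) (by omega)
    have hk := fin_sub_val b (p + 1)
    have htn : t < n := lt_trans ht (b - (p + 1)).isLt
    have hm := mod_two_cases n (x := (p + 1).val + t) (by have := (p + 1).isLt; omega)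
    have hsn := (p + 1).isLt
    constructor <;> omega
end Aux
section Aux2
variable {n : ℕ} [NeZero n]

/-- `Cset0` as a submodule. -/
noncomputable def Csub (n : ℕ) [NeZero n] : Submodule ℂ (Fin n → Matrix (Fin n) (Fin n) ℂ) where
  carrier := Cset0 n
  add_mem' := by
    intro a b ha hb c
    show (a (c + 1) + b (c + 1)) * _ = _ * (a c + b c)
    rw [add_mul, mul_add, ha c, hb c]
  zero_mem' := by
    intro c
    show (0 : Matrix (Fin n) (Fin n) ℂ) * _ = _ * (0 : Matrix (Fin n) (Fin n) ℂ)
    rw [zero_mul, mul_zero]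
  smul_mem' := by
    intro r a ha c
    show (r • a (c + 1)) * _ = _ * (r • a c)
    rw [Matrix.smul_mul, Matrix.mul_smul, ha c]

lemma gen_mem (hn : 2 ≤ n) (k : GenIdx n) : gen0 n k ∈ Cset0 n := by
  intro b
  have hb1 : (b + 1).val = (b.val + 1) % n := fin_add_one_val hn b
  have hd := mod_two_cases n (x := b.val + 1) (by have := b.isLt; omega)
  have hbn := b.isLt
  ext p' q'
  simp only [Dmat0, Matrix.mul_diagonal, Matrix.diagonal_mul]
  match k with
  | Sum.inl i =>
    have hin := i.isLt
    simp only [gen0, Matrix.single, Matrix.of_apply, Fin.ext_iff]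
    split_ifs <;> first | ring1 | (exfalso; omega)
  | Sum.inr (Sum.inl ⟨(i, j), hij⟩) =>
    have hin := i.isLt; have hjn := j.isLt
    have hij' : i.val < j.val := hij
    simp only [gen0]
    have e1 : (if i.val < (b + 1).val ∧ (b + 1).val ≤ j.val then (0 : Matrix (Fin n) (Fin n) ℂ)
        else Matrix.single i j 1) p' q'
        = if i.val < (b + 1).val ∧ (b + 1).val ≤ j.val then (0 : ℂ)
        else Matrix.single i j 1 p' q' := by
      split_ifs <;> simp
    have e2 : (if i.val < b.val ∧ b.val ≤ j.val then (0 : Matrix (Fin n) (Fin n) ℂ)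
        else Matrix.single i j 1) p' q'
        = if i.val < b.val ∧ b.val ≤ j.val then (0 : ℂ)
        else Matrix.single i j 1 p' q' := by
      split_ifs <;> simp
    rw [e1, e2]
    simp only [Matrix.single, Matrix.of_apply, Fin.ext_iff]
    split_ifs <;> first | ring1 | (exfalso; omega)
  | Sum.inr (Sum.inr ⟨(i, j), hij⟩) =>
    have hin := i.isLt; have hjn := j.isLt
    have hij' : i.val < j.val := hij
    simp only [gen0]
    have e1 : (if i.val < (b + 1).val ∧ (b + 1).val ≤ j.val then Matrix.single j i 1
        else (0 : Matrix (Fin n) (Fin n) ℂ)) p' q'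
        = if i.val < (b + 1).val ∧ (b + 1).val ≤ j.val then Matrix.single j i 1 p' q'
        else (0 : ℂ) := by
      split_ifs <;> simp
    have e2 : (if i.val < b.val ∧ b.val ≤ j.val then Matrix.single j i 1
        else (0 : Matrix (Fin n) (Fin n) ℂ)) p' q'
        = if i.val < b.val ∧ b.val ≤ j.val then Matrix.single j i 1 p' q'
        else (0 : ℂ) := by
      split_ifs <;> simp
    rw [e1, e2]
    simp only [Matrix.single, Matrix.of_apply, Fin.ext_iff]
    split_ifs <;> first | ring1 | (exfalso; omega)

/-- Coefficients of an element of `Cset0` with respect to the generators. -/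
def coef (n : ℕ) [NeZero n] (A : Fin n → Matrix (Fin n) (Fin n) ℂ) : GenIdx n → ℂ
  | Sum.inl i => A (i + 1) i i
  | Sum.inr (Sum.inl ⟨(i, j), _⟩) => A (j + 1) i j
  | Sum.inr (Sum.inr ⟨(i, j), _⟩) => A j j i

lemma sum_eval (c : GenIdx n → ℂ) (b p q : Fin n) :
    (∑ k : GenIdx n, c k • gen0 n k) b p q =
      (if p = q then c (Sum.inl p) else 0)
      + (if h : p < q then (if p.val < b.val ∧ b.val ≤ q.val then 0
            else c (Sum.inr (Sum.inl ⟨(p, q), h⟩))) else 0)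
      + (if h : q < p then (if q.val < b.val ∧ b.val ≤ p.val
            then c (Sum.inr (Sum.inr ⟨(q, p), h⟩)) else 0) else 0) := by
  have h1 : (∑ k : GenIdx n, c k • gen0 n k) b p q
      = ∑ k : GenIdx n, c k * gen0 n k b p q := by
    rw [Finset.sum_apply]
    rw [Matrix.sum_apply]
    exact Finset.sum_congr rfl (fun k _ => rfl)
  rw [h1, Fintype.sum_sum_type, Fintype.sum_sum_type, add_assoc]
  congr 1
  · -- diagonal part
    by_cases hpq : p = q
    · subst hpq
      rw [if_pos rfl, Finset.sum_eq_single p]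
      · simp [gen0, Matrix.single]
      · intro i _ hip
        simp only [gen0, Matrix.single, Matrix.of_apply]
        rw [if_neg (fun h => hip h.1), mul_zero]
      · intro h; exact absurd (Finset.mem_univ p) h
    · rw [if_neg hpq]
      apply Finset.sum_eq_zero; intro i _
      simp only [gen0, Matrix.single, Matrix.of_apply]
      rw [if_neg, mul_zero]
      rintro ⟨rfl, rfl⟩; exact hpq rfl
  congr 1
  · -- upper part
    by_cases h : p < q
    · rw [dif_pos h, Finset.sum_eq_single ⟨(p, q), h⟩]
      · simp only [gen0]
        have e : (if p.val < b.val ∧ b.val ≤ q.val then (0 : Matrix (Fin n) (Fin n) ℂ)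
            else Matrix.single p q 1) p q
            = if p.val < b.val ∧ b.val ≤ q.val then (0 : ℂ) else 1 := by
          split_ifs <;> simp [Matrix.single]
        rw [e]; split_ifs <;> ring
      · rintro ⟨⟨i, j⟩, hij⟩ - hne
        have hne' : ¬(i = p ∧ j = q) := by
          rintro ⟨rfl, rfl⟩; exact hne rfl
        simp only [gen0]
        have e : (if i.val < b.val ∧ b.val ≤ j.val then (0 : Matrix (Fin n) (Fin n) ℂ)
            else Matrix.single i j 1) p q = 0 := by
          split_ifs with hc
          · rfl
          · simp only [Matrix.single, Matrix.of_apply]; exact if_neg hne'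
        rw [e, mul_zero]
      · intro h'; exact absurd (Finset.mem_univ _) h'
    · rw [dif_neg h]
      apply Finset.sum_eq_zero
      rintro ⟨⟨i, j⟩, hij⟩ -
      have hne' : ¬(i = p ∧ j = q) := by
        rintro ⟨rfl, rfl⟩; exact h hij
      simp only [gen0]
      have e : (if i.val < b.val ∧ b.val ≤ j.val then (0 : Matrix (Fin n) (Fin n) ℂ)
          else Matrix.single i j 1) p q = 0 := by
        split_ifs with hc
        · rfl
        · simp only [Matrix.single, Matrix.of_apply]; exact if_neg hne'
      rw [e, mul_zero]
  · -- lower part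
    by_cases h : q < p
    · rw [dif_pos h, Finset.sum_eq_single ⟨(q, p), h⟩]
      · simp only [gen0]
        have e : (if q.val < b.val ∧ b.val ≤ p.val then Matrix.single p q 1
            else (0 : Matrix (Fin n) (Fin n) ℂ)) p q
            = if q.val < b.val ∧ b.val ≤ p.val then (1 : ℂ) else 0 := by
          split_ifs <;> simp [Matrix.single]
        rw [e]; split_ifs <;> ring
      · rintro ⟨⟨i, j⟩, hij⟩ - hne
        have hne' : ¬(j = p ∧ i = q) := by
          rintro ⟨rfl, rfl⟩; exact hne rfl
        simp only [gen0]
        have e : (if i.val < b.val ∧ b.val ≤ j.val then Matrix.single j i 1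
            else (0 : Matrix (Fin n) (Fin n) ℂ)) p q = 0 := by
          split_ifs with hc
          · simp only [Matrix.single, Matrix.of_apply]; exact if_neg hne'
          · rfl
        rw [e, mul_zero]
      · intro h'; exact absurd (Finset.mem_univ _) h'
    · rw [dif_neg h]
      apply Finset.sum_eq_zero
      rintro ⟨⟨i, j⟩, hij⟩ -
      have hne' : ¬(j = p ∧ i = q) := by
        rintro ⟨rfl, rfl⟩; exact h hij
      simp only [gen0]
      have e : (if i.val < b.val ∧ b.val ≤ j.val then Matrix.single j i 1
          else (0 : Matrix (Fin n) (Fin n) ℂ)) p q = 0 := by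
        split_ifs with hc
        · simp only [Matrix.single, Matrix.of_apply]; exact if_neg hne'
        · rfl
      rw [e, mul_zero]

end Aux2


/-- `C(0)` equals the ℂ-linear span of the `n²` elements `gen0 n`, and
these elements are linearly independent over `ℂ`. -/
theorem statement9 (n : ℕ) [NeZero n] (hn : 2 ≤ n) :
    (Cset0 n = (Submodule.span ℂ (Set.range (gen0 n)) :
      Set (Fin n → Matrix (Fin n) (Fin n) ℂ))) ∧
    LinearIndependent ℂ (gen0 n) := by
  constructor
  · apply Set.eq_of_subset_of_subset
    · -- Cset0 ⊆ span
      intro A hA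
      have hrepr : A = ∑ k : GenIdx n, coef n A k • gen0 n k := by
        funext b
        ext p q
        rw [sum_eval, cset_key A hn hA b p q]
        by_cases hpq : p = q
        · subst hpq
          simp [lt_irrefl, coef]
        · by_cases hlt : p < q
          · have hv : p.val < q.val := hlt
            have hqp : ¬q < p := asymm hlt
            simp [hpq, hlt, hv, hqp, coef]
          · have hqp : q < p := lt_of_le_of_ne (not_lt.1 hlt) (fun h => hpq h.symm)
            have hv : ¬p.val < q.val := hlt
            simp [hpq, hlt, hv, hqp, coef]
      rw [hrepr]
      exact Submodule.sum_mem _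
        (fun k _ => Submodule.smul_mem _ _ (Submodule.subset_span ⟨k, rfl⟩))
    · -- span ⊆ Cset0
      have hle : Submodule.span ℂ (Set.range (gen0 n)) ≤ Csub n :=
        Submodule.span_le.2 (by rintro _ ⟨k, rfl⟩; exact gen_mem hn k)
      intro A hA
      exact hle hA
  · rw [Fintype.linearIndependent_iff]
    intro g hg
    have h0 : ∀ b p q : Fin n, (∑ k : GenIdx n, g k • gen0 n k) b p q = 0 := by
      intro b p q; rw [hg]; rfl
    intro k
    match k with
    | Sum.inl i =>
      have h := h0 i i i
      rw [sum_eval] at h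
      simpa [lt_irrefl] using h
    | Sum.inr (Sum.inl ⟨(i, j), hij⟩) =>
      have h := h0 i i j
      rw [sum_eval] at h
      have hne : i ≠ j := ne_of_lt hij
      have hv : ¬(i.val < i.val ∧ i.val ≤ j.val) := fun hc => absurd hc.1 (lt_irrefl _)
      simpa [hne, hij, asymm hij, hv] using h
    | Sum.inr (Sum.inr ⟨(i, j), hij⟩) =>
      have h := h0 j j i
      rw [sum_eval] at h
      have hne : j ≠ i := ne_of_gt hij
      have hvv : i.val < j.val := hij
      simpa [hne, hij, asymm hij, hvv] using h
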